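/- Let G₁ be a connected simple graph with vertex set {v₁,…,v_n} and diameter exactly 3, and let k ≥ 1 be an integer. Let G₂ be the graph obtained from G₁ by adding, for each i ∈ {1,…,n}, 2k new vertices A_i = {a_{i,1},…,a_{i,k}} and B_i = {b_{i,1},…,b_{i,k}}, where a_{i,p} is adjacent to b_{i,q} if and only if p ≠ q, the vertex v_i is adjacent to every vertex of A_i, and finally adding one further new vertex v₀ adjacent to all vertices of A_i ∪ B_i for all i, with no other new edges. Then G₂ has radius exactly 2 and diameter exactly 3, and G₂ is 3-colorable if and only if G₁ is 3-colorable. -/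

import Mathlib

def ampGraph {V : Type*} (G : SimpleGraph V) (k : ℕ) :
    SimpleGraph (V ⊕ ((V × Fin k) ⊕ ((V × Fin k) ⊕ Unit))) :=
  SimpleGraph.fromRel fun x y =>
    match x, y with
    | Sum.inl u, Sum.inl w => G.Adj u w
    | Sum.inl u, Sum.inr (Sum.inl p) => u = p.1
    | Sum.inr (Sum.inl p), Sum.inr (Sum.inr (Sum.inl q)) => p.1 = q.1 ∧ p.2 ≠ q.2
    | Sum.inr (Sum.inl _), Sum.inr (Sum.inr (Sum.inr _)) => True
    | Sum.inr (Sum.inr (Sum.inl _)), Sum.inr (Sum.inr (Sum.inr _)) => True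
    | _, _ => False

section Aux
variable {V : Type*} {G : SimpleGraph V} {k : ℕ}

open SimpleGraph Sum

lemma amp_adj_vv {u w : V} : (ampGraph G k).Adj (inl u) (inl w) ↔ G.Adj u w := by
  simp only [ampGraph, SimpleGraph.fromRel_adj]
  constructor
  · rintro ⟨-, h | h⟩; exact h; exact h.symm
  · intro h; exact ⟨by simpa using h.ne, Or.inl h⟩

lemma amp_adj_va {u : V} {p : V × Fin k} :
    (ampGraph G k).Adj (inl u) (inr (inl p)) ↔ u = p.1 := by
  simp [ampGraph, SimpleGraph.fromRel_adj]

lemma amp_adj_ab {p q : V × Fin k} :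
    (ampGraph G k).Adj (inr (inl p)) (inr (inr (inl q))) ↔ p.1 = q.1 ∧ p.2 ≠ q.2 := by
  simp [ampGraph, SimpleGraph.fromRel_adj]

lemma amp_adj_a0 {p : V × Fin k} {t : Unit} :
    (ampGraph G k).Adj (inr (inl p)) (inr (inr (inr t))) := by
  simp [ampGraph, SimpleGraph.fromRel_adj]

lemma amp_adj_b0 {q : V × Fin k} {t : Unit} :
    (ampGraph G k).Adj (inr (inr (inl q))) (inr (inr (inr t))) := by
  simp [ampGraph, SimpleGraph.fromRel_adj]

lemma amp_not_adj_vb {u : V} {q : V × Fin k} :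
    ¬ (ampGraph G k).Adj (inl u) (inr (inr (inl q))) := by
  simp [ampGraph, SimpleGraph.fromRel_adj]

lemma amp_not_adj_v0 {u : V} {t : Unit} :
    ¬ (ampGraph G k).Adj (inl u) (inr (inr (inr t))) := by
  simp [ampGraph, SimpleGraph.fromRel_adj]

lemma amp_not_adj_aa {p q : V × Fin k} :
    ¬ (ampGraph G k).Adj (inr (inl p)) (inr (inl q)) := by
  simp [ampGraph, SimpleGraph.fromRel_adj]

lemma amp_not_adj_bb {p q : V × Fin k} :
    ¬ (ampGraph G k).Adj (inr (inr (inl p))) (inr (inr (inl q))) := by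
  simp [ampGraph, SimpleGraph.fromRel_adj]

/-- The inclusion of `G` into `ampGraph G k` as a graph homomorphism. -/
def ampHom (G : SimpleGraph V) (k : ℕ) : G →g ampGraph G k :=
  ⟨Sum.inl, fun h => amp_adj_vv.mpr h⟩

lemma amp_three_le_dist {x y : V ⊕ ((V × Fin k) ⊕ ((V × Fin k) ⊕ Unit))}
    (hr : (ampGraph G k).Reachable x y)
    (hne : x ≠ y) (hadj : ¬ (ampGraph G k).Adj x y)
    (hmid : ∀ z, ¬ ((ampGraph G k).Adj x z ∧ (ampGraph G k).Adj z y)) :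
    3 ≤ (ampGraph G k).dist x y := by
  by_contra hlt
  push_neg at hlt
  obtain ⟨p, hp⟩ := hr.exists_walk_length_eq_dist
  cases p with
  | nil => exact hne rfl
  | cons h q =>
    cases q with
    | nil => exact hadj h
    | cons h' q' =>
      cases q' with
      | nil => exact hmid _ ⟨h, h'⟩
      | cons h'' q'' => simp [SimpleGraph.Walk.length_cons] at hp; omega

end Aux

/-- If `G₁` is a connected simple graph on finitely many vertices with
diameter exactly 3 and `k ≥ 1`, then the graph `G₂ = ampGraph G₁ k` has radius exactly 2
and diameter exactly 3, and `G₂` is 3-colorable iff `G₁` is 3-colorable. -/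
theorem stmt_17 {V : Type*} [Fintype V] (G₁ : SimpleGraph V) (k : ℕ) (hk : 1 ≤ k)
    (hconn : G₁.Connected)
    (hdiam3 : ∀ x y : V, G₁.dist x y ≤ 3) (hex : ∃ x y : V, G₁.dist x y = 3) :
    ((∃ u, ∀ x, (ampGraph G₁ k).dist u x ≤ 2) ∧
     (∀ u, ∃ x, 2 ≤ (ampGraph G₁ k).dist u x)) ∧
    ((ampGraph G₁ k).Connected ∧
     (∀ x y, (ampGraph G₁ k).dist x y ≤ 3) ∧
     (∃ x y, (ampGraph G₁ k).dist x y = 3)) ∧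
    ((ampGraph G₁ k).Colorable 3 ↔ G₁.Colorable 3) := by
  classical
  open SimpleGraph Sum in
  set G₂ := ampGraph G₁ k with hG₂
  have z : Fin k := ⟨0, hk⟩
  let v₀ : V ⊕ ((V × Fin k) ⊕ ((V × Fin k) ⊕ Unit)) := inr (inr (inr ()))
  -- distances from v₀
  have hA : ∀ p : V × Fin k, G₂.dist v₀ (inr (inl p)) ≤ 1 := fun p =>
    SimpleGraph.dist_le (SimpleGraph.Walk.cons (amp_adj_a0 (p := p)).symm SimpleGraph.Walk.nil)
  have hB : ∀ q : V × Fin k, G₂.dist v₀ (inr (inr (inl q))) ≤ 1 := fun q =>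
    SimpleGraph.dist_le (SimpleGraph.Walk.cons (amp_adj_b0 (q := q)).symm SimpleGraph.Walk.nil)
  have hVv : ∀ i : V, G₂.dist v₀ (inl i) ≤ 2 := fun i =>
    SimpleGraph.dist_le (SimpleGraph.Walk.cons (amp_adj_a0 (p := (i, z))).symm
      (SimpleGraph.Walk.cons ((amp_adj_va (u := i) (p := (i, z))).mpr rfl).symm
        SimpleGraph.Walk.nil))
  have hv0 : ∀ x, G₂.dist v₀ x ≤ 2 := by
    rintro (i | p | q | t)
    · exact hVv i
    · exact (hA p).trans one_le_two
    · exact (hB q).trans one_le_two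
    · exact SimpleGraph.dist_self.le.trans (Nat.zero_le _)
  -- connectivity
  have hreach : ∀ x, G₂.Reachable v₀ x := by
    rintro (i | p | q | t)
    · exact SimpleGraph.Walk.reachable (SimpleGraph.Walk.cons (amp_adj_a0 (p := (i, z))).symm
        (SimpleGraph.Walk.cons ((amp_adj_va (u := i) (p := (i, z))).mpr rfl).symm
          SimpleGraph.Walk.nil))
    · exact SimpleGraph.Adj.reachable (amp_adj_a0 (p := p)).symm
    · exact SimpleGraph.Adj.reachable (amp_adj_b0 (q := q)).symm
    · exact SimpleGraph.Reachable.refl _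
  have hconn₂ : G₂.Connected := by
    rw [SimpleGraph.connected_iff]
    exact ⟨fun x y => (hreach x).symm.trans (hreach y), ⟨v₀⟩⟩
  -- ≥2 from any vertex
  have two_le : ∀ x y, x ≠ y → ¬ G₂.Adj x y → 2 ≤ G₂.dist x y := by
    intro x y hne hadj
    have h0 : G₂.dist x y ≠ 0 := fun h => hne (hconn₂.dist_eq_zero_iff.mp h)
    have h1 : G₂.dist x y ≠ 1 := fun h => hadj (SimpleGraph.dist_eq_one_iff_adj.mp h)
    omega
  refine ⟨⟨⟨v₀, hv0⟩, ?_⟩, ⟨hconn₂, ?_, ?_⟩, ?_, ?_⟩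
  · -- every vertex has eccentricity ≥ 2
    rintro (i | p | q | t)
    · exact ⟨inr (inr (inl (i, z))), two_le _ _ (by simp) amp_not_adj_vb⟩
    · refine ⟨inr (inr (inl p)), two_le _ _ (by simp) ?_⟩
      rw [amp_adj_ab]; simp
    · refine ⟨inr (inl q), two_le _ _ (by simp) ?_⟩
      intro h
      have := amp_adj_ab.mp h.symm
      simp at this
    · obtain ⟨i, -, -⟩ := hex
      exact ⟨inl i, two_le _ _ (by simp) (fun h => amp_not_adj_v0 h.symm)⟩
  · -- diameter ≤ 3
    rintro (i | x') (j | y')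
    · obtain ⟨p, hp⟩ := (hconn i j).exists_walk_length_eq_dist
      calc G₂.dist (inl i) (inl j) ≤ (p.map (ampHom G₁ k)).length := SimpleGraph.dist_le _
        _ = G₁.dist i j := by rw [SimpleGraph.Walk.length_map, hp]
        _ ≤ 3 := hdiam3 i j
    · calc G₂.dist (inl i) (inr y') ≤ G₂.dist (inl i) v₀ + G₂.dist v₀ (inr y') :=
          hconn₂.dist_triangle
        _ ≤ 2 + 1 := by
            refine add_le_add ?_ ?_
            · rw [SimpleGraph.dist_comm]; exact hVv i
            · rcases y' with p | q | t
              · exact hA p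
              · exact hB q
              · exact SimpleGraph.dist_self.le.trans (Nat.zero_le _)
        _ = 3 := rfl
    · calc G₂.dist (inr x') (inl j) ≤ G₂.dist (inr x') v₀ + G₂.dist v₀ (inl j) :=
          hconn₂.dist_triangle
        _ ≤ 1 + 2 := by
            refine add_le_add ?_ (hVv j)
            rw [SimpleGraph.dist_comm]
            rcases x' with p | q | t
            · exact hA p
            · exact hB q
            · exact SimpleGraph.dist_self.le.trans (Nat.zero_le _)
        _ = 3 := rfl
    · calc G₂.dist (inr x') (inr y') ≤ G₂.dist (inr x') v₀ + G₂.dist v₀ (inr y') :=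
          hconn₂.dist_triangle
        _ ≤ 1 + 1 := by
            refine add_le_add ?_ ?_
            · rw [SimpleGraph.dist_comm]
              rcases x' with p | q | t
              · exact hA p
              · exact hB q
              · exact SimpleGraph.dist_self.le.trans (Nat.zero_le _)
            · rcases y' with p | q | t
              · exact hA p
              · exact hB q
              · exact SimpleGraph.dist_self.le.trans (Nat.zero_le _)
        _ ≤ 3 := by omega
  · -- diameter = 3 witness
    obtain ⟨x, y, hxy⟩ := hex
    refine ⟨inl x, inl y, le_antisymm ?_ ?_⟩
    · obtain ⟨p, hp⟩ := (hconn x y).exists_walk_length_eq_dist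
      calc G₂.dist (inl x) (inl y) ≤ (p.map (ampHom G₁ k)).length := SimpleGraph.dist_le _
        _ = 3 := by rw [SimpleGraph.Walk.length_map, hp, hxy]
    · refine amp_three_le_dist (hconn₂.preconnected _ _) ?_ ?_ ?_
      · intro h
        rw [inl.injEq] at h
        subst h
        rw [SimpleGraph.dist_self] at hxy
        omega
      · intro h
        rw [amp_adj_vv] at h
        rw [SimpleGraph.dist_eq_one_iff_adj.mpr h] at hxy
        omega
      · rintro (w | p | q | t) ⟨h1, h2⟩
        · rw [amp_adj_vv] at h1 h2
          have : G₁.dist x y ≤ 2 := SimpleGraph.dist_le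
            (SimpleGraph.Walk.cons h1 (SimpleGraph.Walk.cons h2 SimpleGraph.Walk.nil))
          omega
        · rw [amp_adj_va] at h1
          have h2' : y = p.1 := by
            have := h2.symm; rw [amp_adj_va] at this; exact this
          subst h1; rw [← h2'] at hxy
          rw [SimpleGraph.dist_self] at hxy; omega
        · exact amp_not_adj_vb h1
        · exact amp_not_adj_v0 h1
  · -- Colorable 3 →
    rintro ⟨C⟩
    exact ⟨SimpleGraph.Coloring.mk (fun v => C (inl v))
      (fun h => C.valid (amp_adj_vv.mpr h))⟩
  · -- ← Colorable 3
    rintro ⟨c⟩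
    refine ⟨SimpleGraph.Coloring.mk ?_ ?_⟩
    · rintro (u | p | q | t)
      · exact c u
      · exact if c p.1 = 1 then 2 else 1
      · exact if c q.1 = 1 then 1 else 2
      · exact 0
    · rintro (u | p | q | t) (w | p' | q' | t') h <;> dsimp only
      · exact c.valid (amp_adj_vv.mp h)
      · rw [amp_adj_va] at h; subst h
        split_ifs with h1
        · rw [h1]; decide
        · exact h1
      · exact absurd h amp_not_adj_vb
      · exact absurd h amp_not_adj_v0
      · have h' := h.symm; rw [amp_adj_va] at h'; subst h'
        split_ifs with h1
        · rw [h1]; decide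
        · exact fun e => h1 e.symm
      · exact absurd h amp_not_adj_aa
      · have := (amp_adj_ab.mp h).1; rw [this]
        split_ifs <;> decide
      · split_ifs <;> decide
      · exact absurd h.symm amp_not_adj_vb
      · have := (amp_adj_ab.mp h.symm).1; rw [← this]
        split_ifs <;> decide
      · exact absurd h amp_not_adj_bb
      · split_ifs <;> decide
      · exact absurd h.symm amp_not_adj_v0
      · split_ifs <;> decide
      · split_ifs <;> decide
      · exact absurd h (G₂.loopless.irrefl _)
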